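/- For λ ∈ (0,1) and positive integers m, n with m+n+1 < 1/λ, the degenerate beta function satisfies B_λ(m,n) = ((1)_{m+n+1,λ} / ((1)_{m+1,λ} (1)_{n+1,λ})) · B(m,n). -/

import Mathlib

open Set Filter Topology


open MeasureTheory Complex

/-- The degenerate gamma function, defined as an integral. -/
noncomputable def degGamma (l : ℝ) (s : ℂ) : ℂ :=
  ∫ t in Set.Ioi (0 : ℝ), ((1 + l * t : ℝ) : ℂ) ^ (-(1 / l) : ℂ) * (t : ℂ) ^ (s - 1)

/-- Degenerate beta function. -/
noncomputable def degBeta (l : ℝ) (a b : ℂ) : ℂ :=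
  degGamma l a * degGamma l b / degGamma l (a + b)

/-- The degenerate falling factorial `(1)_{n,λ}`. -/
noncomputable def degPoch (l : ℝ) (n : ℕ) : ℂ :=
  ∏ j ∈ Finset.range n, (1 - (j : ℂ) * l)

-- integrability
lemma myAuxIntegrable (l : ℝ) (hl : 0 < l) (c : ℝ) (k : ℕ) (hc : (k : ℝ) + 1 < c) :
    IntegrableOn (fun t : ℝ => (1 + l * t) ^ (-c) * t ^ k) (Set.Ioi 0) := by
  have hsplit : Set.Ioi (0:ℝ) = Set.Ioc 0 1 ∪ Set.Ioi 1 :=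
    (Set.Ioc_union_Ioi_eq_Ioi zero_le_one).symm
  rw [hsplit]
  apply MeasureTheory.IntegrableOn.union
  · apply IntegrableOn.mono_set _ Set.Ioc_subset_Icc_self
    apply ContinuousOn.integrableOn_Icc
    apply ContinuousOn.mul
    · apply ContinuousOn.rpow_const
      · exact (continuous_const.add (continuous_const.mul continuous_id)).continuousOn
      · intro x hx
        left
        have : (0:ℝ) ≤ x := hx.1
        nlinarith
    · exact (continuous_pow k).continuousOn
  · have hint := (integrableOn_Ioi_rpow_of_lt (show (k : ℝ) - c < -1 by linarith) one_pos).const_mul (l ^ (-c))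
    apply hint.mono
    · apply ContinuousOn.aestronglyMeasurable _ measurableSet_Ioi
      apply ContinuousOn.mul
      · apply ContinuousOn.rpow_const
        · exact (continuous_const.add (continuous_const.mul continuous_id)).continuousOn
        · intro x hx
          left
          have : (1:ℝ) < x := hx
          nlinarith
      · exact (continuous_pow k).continuousOn
    · filter_upwards [ae_restrict_mem measurableSet_Ioi] with x hx
      have hx1 : (1:ℝ) < x := hx
      have hx0 : (0:ℝ) < x := by linarith
      have hb : 0 < 1 + l * x := by nlinarith
      have h1 : (1 + l * x) ^ (-c) ≤ (l * x) ^ (-c) := by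
        apply Real.rpow_le_rpow_of_nonpos (by positivity) (by linarith) (by linarith)
      rw [Real.norm_eq_abs, Real.norm_eq_abs, _root_.abs_of_nonneg (show (0:ℝ) ≤ (1+l*x)^(-c)*x^k by positivity), _root_.abs_of_nonneg (show (0:ℝ) ≤ l^(-c)*x^((k:ℝ)-c) by positivity)]
      calc (1 + l * x) ^ (-c) * x ^ k ≤ (l * x) ^ (-c) * x ^ k := by
            apply mul_le_mul_of_nonneg_right h1 (by positivity)
        _ = l ^ (-c) * x ^ ((k:ℝ) - c) := by
            rw [Real.mul_rpow hl.le hx0.le, ← Real.rpow_natCast x k, mul_assoc, ← Real.rpow_add hx0]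
            ring_nf

lemma myTendstoAux (l : ℝ) (hl : 0 < l) (a : ℝ) (ha : a < 0) :
    Tendsto (fun t : ℝ => (1 + l * t) ^ a) atTop (𝓝 0) := by
  have h1 : Tendsto (fun t : ℝ => 1 + l * t) atTop atTop :=
    tendsto_atTop_add_const_left _ _ (Filter.Tendsto.const_mul_atTop hl tendsto_id)
  have h2 : Tendsto (fun x : ℝ => x ^ (-(-a))) atTop (𝓝 0) :=
    tendsto_rpow_neg_atTop (by linarith)
  simpa [Function.comp_def] using h2.comp h1

lemma myKey (l : ℝ) (hl : 0 < l) : ∀ (k : ℕ) (c : ℝ), (k : ℝ) + 1 < c →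
    ∫ t in Set.Ioi (0:ℝ), (1 + l * t) ^ (-c) * t ^ k
      = (k.factorial : ℝ) / (l ^ (k + 1) * ∏ j ∈ Finset.range (k + 1), (c - (j + 1))) := by
  intro k
  induction k with
  | zero =>
    intro c hc
    have hc1 : (1:ℝ) < c := by simpa using hc
    have hderiv : ∀ x ∈ Set.Ici (0:ℝ),
        HasDerivAt (fun t : ℝ => -(1 + l * t) ^ (1 - c) / (l * (c - 1)))
          ((1 + l * x) ^ (-c) * x ^ 0) x := by
      intro x hx
      have hx0 : (0:ℝ) ≤ x := hx
      have hb : (0:ℝ) < 1 + l * x := by nlinarith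
      have h1 : HasDerivAt (fun t : ℝ => 1 + l * t) l x := by
        simpa using ((hasDerivAt_id x).const_mul l).const_add 1
      have h2 := h1.rpow_const (p := 1 - c) (Or.inl hb.ne')
      have h3 := (h2.neg).div_const (l * (c - 1))
      refine h3.congr_deriv ?_
      have : (1 : ℝ) - c - 1 = -c := by ring
      rw [this, pow_zero, mul_one]
      have hc0 : (0:ℝ) < c - 1 := by linarith
      have hne : l * (c - 1) ≠ 0 := by positivity
      field_simp
      ring
    have hint : IntegrableOn (fun t : ℝ => (1 + l * t) ^ (-c) * t ^ 0) (Set.Ioi 0) :=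
      myAuxIntegrable l hl c 0 (by simpa using hc)
    have htend : Tendsto (fun t : ℝ => -(1 + l * t) ^ (1 - c) / (l * (c - 1))) atTop (𝓝 0) := by
      have := (myTendstoAux l hl (1 - c) (by linarith)).neg.div_const (l * (c - 1))
      simpa using this
    have := integral_Ioi_of_hasDerivAt_of_tendsto' hderiv hint htend
    rw [this]
    simp [Real.one_rpow]
    field_simp
  | succ k ih =>
    intro c hc
    have hc' : (k : ℝ) + 2 < c := by push_cast at hc; linarith
    set f : ℝ → ℝ := fun t => t ^ (k + 1) * (1 + l * t) ^ (-(c - 1)) with hf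
    have hderiv : ∀ x ∈ Set.Ici (0:ℝ), HasDerivAt f
        (((k:ℝ) + 1) * ((1 + l * x) ^ (-(c-1)) * x ^ k)
          - (l * (c - 1)) * ((1 + l * x) ^ (-c) * x ^ (k + 1))) x := by
      intro x hx
      have hx0 : (0:ℝ) ≤ x := hx
      have hb : (0:ℝ) < 1 + l * x := by nlinarith
      have h1 : HasDerivAt (fun t : ℝ => t ^ (k+1)) (((k:ℝ)+1) * x ^ k) x := by
        simpa using hasDerivAt_pow (k+1) x
      have hlin : HasDerivAt (fun t : ℝ => 1 + l * t) l x := by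
        simpa using ((hasDerivAt_id x).const_mul l).const_add 1
      have h2 := hlin.rpow_const (p := -(c-1)) (Or.inl hb.ne')
      have h3 := h1.mul h2
      refine h3.congr_deriv ?_
      rw [show -(c-1) - 1 = -c by ring]
      ring
    have hint1 : IntegrableOn (fun t : ℝ => (1 + l * t) ^ (-(c-1)) * t ^ k) (Set.Ioi 0) :=
      myAuxIntegrable l hl (c-1) k (by linarith)
    have hint2 : IntegrableOn (fun t : ℝ => (1 + l * t) ^ (-c) * t ^ (k+1)) (Set.Ioi 0) :=
      myAuxIntegrable l hl c (k+1) (by push_cast; linarith)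
    have hint : IntegrableOn (fun x : ℝ =>
        ((k:ℝ) + 1) * ((1 + l * x) ^ (-(c-1)) * x ^ k)
          - (l * (c - 1)) * ((1 + l * x) ^ (-c) * x ^ (k + 1))) (Set.Ioi 0) :=
      (hint1.const_mul _).sub (hint2.const_mul _)
    have htend : Tendsto f atTop (𝓝 0) := by
      apply squeeze_zero' (g := fun t : ℝ => l ^ (-(c-1)) * t ^ ((k:ℝ) + 1 - (c - 1)))
      · filter_upwards [eventually_ge_atTop (1:ℝ)] with x hx1
        have hb : (0:ℝ) < 1 + l * x := by nlinarith
        positivity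
      · filter_upwards [eventually_ge_atTop (1:ℝ)] with x hx1
        have hx0 : (0:ℝ) < x := by linarith
        have hb : (0:ℝ) < 1 + l * x := by nlinarith
        have h1 : (1 + l * x) ^ (-(c-1)) ≤ (l * x) ^ (-(c-1)) :=
          Real.rpow_le_rpow_of_nonpos (by positivity) (by linarith) (by linarith)
        calc x ^ (k+1) * (1 + l * x) ^ (-(c-1)) ≤ x ^ (k+1) * (l * x) ^ (-(c-1)) := by
              apply mul_le_mul_of_nonneg_left h1 (by positivity)
          _ = l ^ (-(c-1)) * x ^ ((k:ℝ) + 1 - (c - 1)) := by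
              rw [Real.mul_rpow hl.le hx0.le, ← Real.rpow_natCast x (k+1),
                show ((k+1:ℕ):ℝ) = (k:ℝ)+1 by push_cast; ring,
                ← mul_assoc, mul_comm (x ^ ((k:ℝ)+1)), mul_assoc, ← Real.rpow_add hx0]
              ring_nf
      · have := (tendsto_rpow_neg_atTop (y := (c - 1) - ((k:ℝ)+1)) (by linarith)).const_mul
          (l ^ (-(c-1)))
        simpa [mul_zero, show -((c-1) - ((k:ℝ)+1)) = (k:ℝ)+1-(c-1) by ring] using this
    have hzero := integral_Ioi_of_hasDerivAt_of_tendsto' hderiv hint htend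
    have hf0 : f 0 = 0 := by simp [hf]
    rw [hf0, sub_zero, integral_sub (hint1.const_mul _) (hint2.const_mul _),
      MeasureTheory.integral_const_mul, MeasureTheory.integral_const_mul, sub_eq_zero] at hzero
    have hihres := ih (c-1) (by linarith)
    rw [hihres] at hzero
    -- hzero : (k+1) * (k! / (l^(k+1) * P)) = (l*(c-1)) * ∫ target
    set P : ℝ := ∏ j ∈ Finset.range (k + 1), (c - 1 - ((j:ℝ) + 1)) with hP
    have hPpos : 0 < P := by
      apply Finset.prod_pos
      intro j hj
      have : (j:ℝ) + 2 ≤ (k:ℝ) + 2 := by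
        have := Finset.mem_range.mp hj
        have : (j:ℝ) ≤ (k:ℝ) := by exact_mod_cast Nat.lt_succ_iff.mp this
        linarith
      linarith
    have hprod : ∏ j ∈ Finset.range (k + 2), (c - ((j:ℝ) + 1)) = P * (c - 1) := by
      rw [hP, Finset.prod_range_succ' (fun j => c - ((j:ℝ) + 1)) (k+1)]
      congr 1
      · apply Finset.prod_congr rfl
        intro j hj
        push_cast
        ring
      · norm_num
    have hlc : l * (c - 1) ≠ 0 := by
      have : (0:ℝ) < c - 1 := by linarith
      positivity
    have hItarget : ∫ t in Set.Ioi (0:ℝ), (1 + l * t) ^ (-c) * t ^ (k+1)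
        = ((k:ℝ) + 1) * ((k.factorial : ℝ) / (l ^ (k + 1) * P)) / (l * (c - 1)) := by
      field_simp at hzero ⊢
      rw [eq_div_iff (by linarith : c - 1 ≠ 0)]
      linear_combination -hzero
    rw [hItarget, hprod]
    have hl0 : l ≠ 0 := hl.ne'
    have hc10 : c - 1 ≠ 0 := by intro h; nlinarith
    rw [Nat.factorial_succ]
    push_cast
    field_simp
    ring

lemma myDegGamma (l : ℝ) (hl : 0 < l) (m : ℕ) (hm : 0 < m) (h : (m:ℝ) < 1/l) :
    degGamma l m = (Nat.factorial (m-1) : ℂ) / degPoch l (m+1) := by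
  obtain ⟨k, rfl⟩ : ∃ k, m = k + 1 := ⟨m - 1, (Nat.succ_pred_eq_of_pos hm).symm⟩
  rw [degGamma]
  have heq : ∀ t ∈ Set.Ioi (0:ℝ),
      ((1 + l * t : ℝ) : ℂ) ^ (-(1 / l) : ℂ) * (t : ℂ) ^ ((((k+1):ℕ) : ℂ) - 1)
        = (((1 + l * t) ^ (-(1/l)) * t ^ k : ℝ) : ℂ) := by
    intro t ht
    have ht0 : (0:ℝ) < t := ht
    have hb : (0:ℝ) ≤ 1 + l * t := by nlinarith
    have h1 : ((1 + l * t : ℝ) : ℂ) ^ (-(1 / l) : ℂ)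
        = (((1 + l * t) ^ (-(1/l)) : ℝ) : ℂ) := by
      rw [show (-(1/(l:ℂ))) = ((-(1/l) : ℝ) : ℂ) by push_cast; ring, ← Complex.ofReal_cpow hb]
    have h2 : (((k+1:ℕ)):ℂ) - 1 = ((k:ℕ):ℂ) := by push_cast; ring
    rw [h1, h2, Complex.cpow_natCast]
    push_cast
    ring
  rw [setIntegral_congr_fun measurableSet_Ioi heq,
    show (∫ x in Set.Ioi (0:ℝ), (((1 + l * x) ^ (-(1/l)) * x ^ k : ℝ) : ℂ))
      = (((∫ x in Set.Ioi (0:ℝ), (1 + l * x) ^ (-(1/l)) * x ^ k) : ℝ) : ℂ) from integral_ofReal,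
    myKey l hl k (1/l) (by push_cast at h; linarith)]
  have hden : l ^ (k+1) * ∏ j ∈ Finset.range (k+1), (1/l - ((j:ℝ)+1))
      = ∏ j ∈ Finset.range (k+1), (1 - ((j:ℝ)+1) * l) := by
    rw [show l ^ (k+1) = ∏ _j ∈ Finset.range (k+1), l by
      rw [Finset.prod_const, Finset.card_range], ← Finset.prod_mul_distrib]
    apply Finset.prod_congr rfl
    intro j _
    field_simp
  have hpoch : degPoch l (k+1+1)
      = ((∏ j ∈ Finset.range (k+1), (1 - ((j:ℝ)+1) * l) : ℝ) : ℂ) := by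
    rw [degPoch, Finset.prod_range_succ' (fun j => 1 - (j:ℂ) * l) (k+1)]
    push_cast
    simp
  rw [hpoch, show (k+1) - 1 = k from rfl, hden]
  push_cast
  ring

lemma myDegPochNe (l : ℝ) (hl : 0 < l) (N : ℕ) (h : (N:ℝ) - 1 < 1/l) : degPoch l N ≠ 0 := by
  rw [degPoch]
  apply Finset.prod_ne_zero_iff.mpr
  intro j hj
  have hjN : (j:ℝ) + 1 ≤ (N:ℝ) := by exact_mod_cast Nat.succ_le_of_lt (Finset.mem_range.mp hj)
  have hjl : (j:ℝ) < 1/l := by linarith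
  have h1 : (j:ℝ) * l < 1 := by
    have := (lt_div_iff₀ hl).mp hjl
    linarith
  have h2 : ((1 - (j:ℝ) * l : ℝ) : ℂ) ≠ 0 := Complex.ofReal_ne_zero.mpr (by linarith)
  push_cast at h2
  convert h2 using 2


theorem degBeta_nat (l : ℝ) (hl : l ∈ Set.Ioo (0 : ℝ) 1)
    (m n : ℕ) (hm : 0 < m) (hn : 0 < n) (hmn : (m : ℝ) + n + 1 < 1 / l) :
    degBeta l m n =
      degPoch l (m + n + 1) / (degPoch l (m + 1) * degPoch l (n + 1)) *
        ((Nat.factorial (m - 1) : ℂ) * (Nat.factorial (n - 1) : ℂ) /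
          (Nat.factorial (m + n - 1) : ℂ)) := by
  obtain ⟨hl0, hl1⟩ := hl
  have hm1 : (1:ℝ) ≤ m := by exact_mod_cast hm
  have hn1 : (1:ℝ) ≤ n := by exact_mod_cast hn
  have hmlt : (m:ℝ) < 1/l := by linarith
  have hnlt : (n:ℝ) < 1/l := by linarith
  have hmnlt : ((m+n:ℕ):ℝ) < 1/l := by push_cast; linarith
  rw [degBeta, show ((m:ℂ) + n) = ((m+n:ℕ):ℂ) by push_cast; ring,
    myDegGamma l hl0 m hm hmlt, myDegGamma l hl0 n hn hnlt,
    myDegGamma l hl0 (m+n) (by omega) hmnlt]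
  have hP1 : degPoch l (m+1) ≠ 0 := myDegPochNe l hl0 (m+1) (by push_cast; linarith)
  have hP2 : degPoch l (n+1) ≠ 0 := myDegPochNe l hl0 (n+1) (by push_cast; linarith)
  have hP3 : degPoch l (m+n+1) ≠ 0 := myDegPochNe l hl0 (m+n+1) (by push_cast; linarith)
  have hA : (Nat.factorial (m-1) : ℂ) ≠ 0 := Nat.cast_ne_zero.mpr (Nat.factorial_ne_zero _)
  have hB : (Nat.factorial (n-1) : ℂ) ≠ 0 := Nat.cast_ne_zero.mpr (Nat.factorial_ne_zero _)
  have hC : (Nat.factorial (m+n-1) : ℂ) ≠ 0 := Nat.cast_ne_zero.mpr (Nat.factorial_ne_zero _)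
  field_simp
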